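/- Let H be the bipartite graph with parts E' = {e_2,...,e_d} and F = {f_1,...,f_{d-1}} (d ≥ 2) and edge set {e_i f_j : 1 ≤ j < i ≤ d}. For a subset S of the vertex set, the complement graph (H_S)^c of the induced subgraph on S is disconnected if and only if S ∩ E' ≠ ∅, S ∩ F ≠ ∅, and for every f_j ∈ S and every e_i ∈ S one has i > j (equivalently there is no pair e_i ∈ S, f_j ∈ S with i ≤ j). Moreover in that case (H_S)^c has exactly 2 connected components. -/

import Mathlib

/-- Vertex set `{e_2,…,e_d} ⊔ {f_1,…,f_{d-1}}`. -/
def V19 (d : ℕ) := {a : ℕ // 2 ≤ a ∧ a ≤ d} ⊕ {b : ℕ // 1 ≤ b ∧ b ≤ d - 1}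

instance (d : ℕ) : DecidableEq (V19 d) := by unfold V19; infer_instance

/-- The bipartite graph `H` with edges `e_i f_j` for `1 ≤ j < i ≤ d`. -/
def H19 (d : ℕ) : SimpleGraph (V19 d) :=
  SimpleGraph.fromRel (fun u v =>
    ∃ (i : {a : ℕ // 2 ≤ a ∧ a ≤ d}) (j : {b : ℕ // 1 ≤ b ∧ b ≤ d - 1}),
      u = Sum.inl i ∧ v = Sum.inr j ∧ (j : ℕ) < (i : ℕ))

section aux

variable {d : ℕ} {S : Set (V19 d)}

lemma adj_ll (i i' : {a : ℕ // 2 ≤ a ∧ a ≤ d}) (hi : Sum.inl i ∈ S) (hi' : Sum.inl i' ∈ S)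
    (hne : i ≠ i') : (((H19 d).induce S)ᶜ).Adj ⟨Sum.inl i, hi⟩ ⟨Sum.inl i', hi'⟩ := by
  simp only [SimpleGraph.compl_adj, SimpleGraph.induce_adj]
  simp [V19, H19, SimpleGraph.fromRel_adj, Subtype.ext_iff, hne]

lemma adj_rr (j j' : {b : ℕ // 1 ≤ b ∧ b ≤ d - 1}) (hj : Sum.inr j ∈ S) (hj' : Sum.inr j' ∈ S)
    (hne : j ≠ j') : (((H19 d).induce S)ᶜ).Adj ⟨Sum.inr j, hj⟩ ⟨Sum.inr j', hj'⟩ := by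
  simp only [SimpleGraph.compl_adj, SimpleGraph.induce_adj]
  simp [V19, H19, SimpleGraph.fromRel_adj, Subtype.ext_iff, hne]

lemma adj_lr (i : {a : ℕ // 2 ≤ a ∧ a ≤ d}) (j : {b : ℕ // 1 ≤ b ∧ b ≤ d - 1})
    (hi : Sum.inl i ∈ S) (hj : Sum.inr j ∈ S) :
    (((H19 d).induce S)ᶜ).Adj ⟨Sum.inl i, hi⟩ ⟨Sum.inr j, hj⟩ ↔ (i : ℕ) ≤ (j : ℕ) := by
  simp only [SimpleGraph.compl_adj, SimpleGraph.induce_adj]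
  simp [V19, H19, SimpleGraph.fromRel_adj, Subtype.ext_iff]
  exact ⟨fun h => h i.2.1 i.2.2 j.2.1 j.2.2,
    fun h _ _ _ _ => h⟩

/-- Under the hypothesis "always `j < i`", adjacency preserves the side. -/
lemma adj_side (hc : ∀ (i : {a : ℕ // 2 ≤ a ∧ a ≤ d}) (j : {b : ℕ // 1 ≤ b ∧ b ≤ d - 1}),
      Sum.inl i ∈ S → Sum.inr j ∈ S → (j : ℕ) < (i : ℕ))
    (u v : S) (h : (((H19 d).induce S)ᶜ).Adj u v) :
    (u : V19 d).isLeft = (v : V19 d).isLeft := by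
  obtain ⟨uv, hu⟩ := u
  obtain ⟨vv, hv⟩ := v
  match uv, vv with
  | Sum.inl i, Sum.inl i' => rfl
  | Sum.inr j, Sum.inr j' => rfl
  | Sum.inl i, Sum.inr j =>
      exact absurd ((adj_lr i j hu hv).mp h) (not_le.mpr (hc i j hu hv))
  | Sum.inr j, Sum.inl i =>
      exact absurd ((adj_lr i j hv hu).mp h.symm) (not_le.mpr (hc i j hv hu))

lemma reach_side (hc : ∀ (i : {a : ℕ // 2 ≤ a ∧ a ≤ d}) (j : {b : ℕ // 1 ≤ b ∧ b ≤ d - 1}),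
      Sum.inl i ∈ S → Sum.inr j ∈ S → (j : ℕ) < (i : ℕ))
    (u v : S) (h : (((H19 d).induce S)ᶜ).Reachable u v) :
    (u : V19 d).isLeft = (v : V19 d).isLeft := by
  obtain ⟨w⟩ := h
  induction w with
  | nil => rfl
  | cons hadj _ ih => exact (adj_side hc _ _ hadj).trans ih

/-- Same-side vertices are reachable (adjacent or equal). -/
lemma side_reach (u v : S) (h : (u : V19 d).isLeft = (v : V19 d).isLeft) :
    (((H19 d).induce S)ᶜ).Reachable u v := by
  obtain ⟨uv, hu⟩ := u
  obtain ⟨vv, hv⟩ := v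
  match uv, vv with
  | Sum.inl i, Sum.inl i' =>
      by_cases hii : i = i'
      · subst hii; rfl
      · exact (adj_ll i i' hu hv hii).reachable
  | Sum.inr j, Sum.inr j' =>
      by_cases hjj : j = j'
      · subst hjj; rfl
      · exact (adj_rr j j' hu hv hjj).reachable
  | Sum.inl i, Sum.inr j => simp at h
  | Sum.inr j, Sum.inl i => simp at h

end aux

/-- for a subset `S` of the vertices of `H`, the complement `(H_S)ᶜ` of the
induced subgraph on `S` is disconnected if and only if `S` meets both sides of the
bipartition and `i > j` for every `e_i ∈ S` and `f_j ∈ S`; moreover in that case `(H_S)ᶜ`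
has exactly two connected components. -/
theorem stmt9 (d : ℕ) (hd : 2 ≤ d) (S : Set (V19 d)) :
    (¬ (((H19 d).induce S)ᶜ).Preconnected ↔
      ((∃ i, Sum.inl i ∈ S) ∧ (∃ j, Sum.inr j ∈ S) ∧
        ∀ i j, Sum.inl i ∈ S → Sum.inr j ∈ S → (j : ℕ) < (i : ℕ))) ∧
    (¬ (((H19 d).induce S)ᶜ).Preconnected →
      Nat.card (((H19 d).induce S)ᶜ).ConnectedComponent = 2) := by
  classical
  have main : ¬ (((H19 d).induce S)ᶜ).Preconnected ↔
      ((∃ i, Sum.inl i ∈ S) ∧ (∃ j, Sum.inr j ∈ S) ∧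
        ∀ i j, Sum.inl i ∈ S → Sum.inr j ∈ S → (j : ℕ) < (i : ℕ)) := by
    constructor
    · -- if disconnected then the conditions hold
      intro hnp
      by_contra hR
      apply hnp
      -- show preconnected from the failure of the conditions
      by_cases hE : ∃ i, Sum.inl i ∈ S
      · by_cases hF : ∃ j, Sum.inr j ∈ S
        · -- there must be a pair i ≤ j
          have : ∃ (i : {a : ℕ // 2 ≤ a ∧ a ≤ d}) (j : {b : ℕ // 1 ≤ b ∧ b ≤ d - 1}),
              Sum.inl i ∈ S ∧ Sum.inr j ∈ S ∧ (i : ℕ) ≤ (j : ℕ) := by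
            by_contra hx
            push_neg at hx
            exact hR ⟨hE, hF, fun i j hi hj => hx i j hi hj⟩
          obtain ⟨i0, j0, hi0, hj0, hij⟩ := this
          -- hub vertices
          set u0 : S := ⟨Sum.inl i0, hi0⟩
          set v0 : S := ⟨Sum.inr j0, hj0⟩
          have h00 : (((H19 d).induce S)ᶜ).Reachable u0 v0 :=
            ((adj_lr i0 j0 hi0 hj0).mpr hij).reachable
          have hub : ∀ u : S, (((H19 d).induce S)ᶜ).Reachable u u0 := by
            intro u
            obtain ⟨uv, hu⟩ := u
            match uv with
            | Sum.inl i => exact side_reach ⟨Sum.inl i, hu⟩ u0 rfl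
            | Sum.inr j => exact (side_reach ⟨Sum.inr j, hu⟩ v0 rfl).trans h00.symm
          intro u v
          exact (hub u).trans (hub v).symm
        · -- no vertex on the right: everything is on the left
          intro u v
          apply side_reach
          obtain ⟨uv, hu⟩ := u
          obtain ⟨vv, hv⟩ := v
          match uv, vv with
          | Sum.inl _, Sum.inl _ => rfl
          | _, Sum.inr j => exact absurd ⟨j, hv⟩ hF
          | Sum.inr j, _ => exact absurd ⟨j, hu⟩ hF
      · -- no vertex on the left
        intro u v
        apply side_reach
        obtain ⟨uv, hu⟩ := u
        obtain ⟨vv, hv⟩ := v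
        match uv, vv with
        | Sum.inr _, Sum.inr _ => rfl
        | Sum.inl i, _ => exact absurd ⟨i, hu⟩ hE
        | _, Sum.inl i => exact absurd ⟨i, hv⟩ hE
    · rintro ⟨⟨i, hi⟩, ⟨j, hj⟩, hc⟩ hp
      have := reach_side hc ⟨Sum.inl i, hi⟩ ⟨Sum.inr j, hj⟩ (hp _ _)
      simp at this
  refine ⟨main, fun hnp => ?_⟩
  obtain ⟨⟨i1, hi1⟩, ⟨j1, hj1⟩, hc⟩ := main.mp hnp
  -- biject connected components with Bool via the side map
  let f : (((H19 d).induce S)ᶜ).ConnectedComponent → Bool :=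
    SimpleGraph.ConnectedComponent.lift (fun u => (u : V19 d).isLeft)
      (fun u v p _ => reach_side hc u v ⟨p⟩)
  have hbij : Function.Bijective f := by
    constructor
    · refine SimpleGraph.ConnectedComponent.ind₂ (fun u v h => ?_)
      exact SimpleGraph.ConnectedComponent.sound (side_reach u v h)
    · intro b
      cases b
      · exact ⟨(((H19 d).induce S)ᶜ).connectedComponentMk ⟨Sum.inr j1, hj1⟩, rfl⟩
      · exact ⟨(((H19 d).induce S)ᶜ).connectedComponentMk ⟨Sum.inl i1, hi1⟩, rfl⟩
  rw [Nat.card_eq_of_bijective f hbij]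
  simp [Nat.card_eq_fintype_card]
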